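/- Let p be an odd prime, q = p^e with e ≥ 2, let 0 < t ≤ e-1, and let 0 ≤ u, v ≤ (p-1)/2 with s determined by 2s = q - 1 - 2(u + v·p^t). Then the base-p digit expansion of 2s is: digit p-1-2u in position 0, digit p-1-2v in position t, and digit p-1 in all other positions. Consequently, for 2 ≤ i ≤ q-2, the binomial coefficient C(i, 2s) is not divisible by p only if the base-p digits of i are p-1-a in position 0, p-1-b in position t, and p-1 elsewhere, for some 0 ≤ a ≤ 2u and 0 ≤ b ≤ 2v. -/
import Mathlib

open Finset in
lemma my_geom (p : ℕ) (hp : 1 ≤ p) (e : ℕ) :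
    (∑ j ∈ Finset.range e, (p - 1) * p ^ j) + 1 = p ^ e := by
  induction e with
  | zero => simp
  | succ n ih =>
    have h : 1 + (p - 1) = p := by omega
    calc (∑ j ∈ Finset.range (n+1), (p - 1) * p ^ j) + 1
        = ((∑ j ∈ Finset.range n, (p - 1) * p ^ j) + 1) + (p - 1) * p ^ n := by
          rw [Finset.sum_range_succ]; ring
      _ = p ^ n + (p - 1) * p ^ n := by rw [ih]
      _ = (1 + (p - 1)) * p ^ n := by ring
      _ = p ^ (n + 1) := by rw [h, pow_succ, mul_comm]

lemma my_digit (p : ℕ) (hp : 1 < p) :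
    ∀ (k e : ℕ) (c : ℕ → ℕ), k < e → (∀ j, j < e → c j < p) →
      (∑ j ∈ Finset.range e, c j * p ^ j) / p ^ k % p = c k := by
  intro k
  induction k with
  | zero =>
    intro e c hk hc
    obtain ⟨e', rfl⟩ : ∃ e', e = e' + 1 := ⟨e - 1, by omega⟩
    rw [Finset.sum_range_succ']
    simp only [pow_zero, mul_one, Nat.div_one]
    have hd : p ∣ ∑ j ∈ Finset.range e', c (j + 1) * p ^ (j + 1) := by
      apply Finset.dvd_sum
      intro j _
      exact Dvd.dvd.mul_left (dvd_pow_self p (Nat.succ_ne_zero j)) _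
    obtain ⟨m, hm⟩ := hd
    rw [hm, mul_comm, Nat.mul_add_mod']
    exact Nat.mod_eq_of_lt (hc 0 (by omega))
  | succ k ih =>
    intro e c hk hc
    obtain ⟨e', rfl⟩ : ∃ e', e = e' + 1 := ⟨e - 1, by omega⟩
    rw [Finset.sum_range_succ']
    have hrw : ∀ j, c (j + 1) * p ^ (j + 1) = p * (c (j + 1) * p ^ j) := by
      intro j; rw [pow_succ]; ring
    simp only [hrw, pow_zero, mul_one]
    rw [← Finset.mul_sum, pow_succ', ← Nat.div_div_eq_div_mul,
      Nat.mul_add_div (by omega), Nat.div_eq_of_lt (hc 0 (by omega)), add_zero]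
    exact ih e' (fun j => c (j + 1)) (by omega) (fun j hj => hc (j + 1) (by omega))

theorem stmt_12 (p e t u v s : ℕ) (hp : p.Prime) (hodd : Odd p) (he : 2 ≤ e)
    (ht1 : 1 ≤ t) (ht2 : t ≤ e - 1)
    (hu : u ≤ (p - 1) / 2) (hv : v ≤ (p - 1) / 2)
    (hs : s = (p ^ e - 1) / 2 - (u + v * p ^ t)) :
    (∀ j < e, 2 * s / p ^ j % p =
      if j = 0 then p - 1 - 2 * u else if j = t then p - 1 - 2 * v else p - 1) ∧
    (∀ i, 2 ≤ i → i ≤ p ^ e - 2 → ¬ p ∣ i.choose (2 * s) →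
      ∃ a b, a ≤ 2 * u ∧ b ≤ 2 * v ∧
        ∀ j < e, i / p ^ j % p =
          if j = 0 then p - 1 - a else if j = t then p - 1 - b else p - 1) := by
  haveI : Fact p.Prime := ⟨hp⟩
  have hp1 : 1 < p := hp.one_lt
  have hpodd : p % 2 = 1 := Nat.odd_iff.mp hodd
  have hpe_odd : p ^ e % 2 = 1 := Nat.odd_iff.mp (hodd.pow)
  have h2u : 2 * u ≤ p - 1 := by omega
  have h2v : 2 * v ≤ p - 1 := by omega
  have ht0 : t ≠ 0 := by omega
  have hte : t < e := by omega
  have hP : p ≤ p ^ t := Nat.le_self_pow ht0 p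
  have hE2 : 2 ≤ p ^ e := by
    calc 2 ≤ p := by omega
    _ = p ^ 1 := (pow_one p).symm
    _ ≤ p ^ e := Nat.pow_le_pow_right (by omega) (by omega)
  have hwb : 2 * (v * p ^ t) + p ^ t ≤ p ^ e := by
    calc 2 * (v * p ^ t) + p ^ t = (2 * v + 1) * p ^ t := by ring
      _ ≤ p * p ^ t := Nat.mul_le_mul_right _ (by omega)
      _ = p ^ (t + 1) := (pow_succ' p t).symm
      _ ≤ p ^ e := Nat.pow_le_pow_right (by omega) (by omega)
  have hS2 : 2 * s = p ^ e - 1 - 2 * u - 2 * (v * p ^ t) := by omega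
  -- the representation of 2s as a sum of digits
  set c : ℕ → ℕ := fun j =>
    if j = 0 then p - 1 - 2 * u else if j = t then p - 1 - 2 * v else p - 1 with hc
  have hclt : ∀ j, j < e → c j < p := by
    intro j _; simp only [hc]; split_ifs <;> omega
  have hsum : (∑ j ∈ Finset.range e, c j * p ^ j) + (2 * u + 2 * (v * p ^ t))
      = p ^ e - 1 := by
    have hgeom := my_geom p (by omega) e
    have hpoint : ∀ j ∈ Finset.range e, (p - 1) * p ^ j =
        c j * p ^ j + ((if j = 0 then 2 * u else 0) * p ^ j
          + (if j = t then 2 * v else 0) * p ^ j) := by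
      intro j _
      rw [← add_mul, ← add_mul]
      congr 1
      simp only [hc]
      split_ifs <;> omega
    have h1 : ∑ j ∈ Finset.range e, (if j = 0 then 2 * u else 0) * p ^ j = 2 * u := by
      rw [Finset.sum_eq_single_of_mem 0 (Finset.mem_range.mpr (by omega))
        (fun b _ hb => by simp [hb])]
      simp
    have h2 : ∑ j ∈ Finset.range e, (if j = t then 2 * v else 0) * p ^ j
        = 2 * (v * p ^ t) := by
      rw [Finset.sum_eq_single_of_mem t (Finset.mem_range.mpr hte)
        (fun b _ hb => by simp [hb])]
      simp; ring
    have hsplit : (∑ j ∈ Finset.range e, (p - 1) * p ^ j)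
        = (∑ j ∈ Finset.range e, c j * p ^ j) + (2 * u + 2 * (v * p ^ t)) := by
      rw [Finset.sum_congr rfl hpoint, Finset.sum_add_distrib, Finset.sum_add_distrib,
        h1, h2]
    omega
  have hrepr : 2 * s = ∑ j ∈ Finset.range e, c j * p ^ j := by omega
  have key : ∀ j < e, 2 * s / p ^ j % p = c j := by
    intro j hj
    rw [hrepr]
    exact my_digit p hp1 j e c hj hclt
  constructor
  · exact key
  · intro i hi2 hiU hnd
    have hiE : i < p ^ e := by omega
    have h2sE : 2 * s < p ^ e := by omega
    have hle : ∀ j, j < e → 2 * s / p ^ j % p ≤ i / p ^ j % p := by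
      by_contra hcon
      push_neg at hcon
      obtain ⟨j, hj, hlt⟩ := hcon
      apply hnd
      have hmod := Choose.lucas_theorem_nat (p := p) hiE h2sE
      have hzero : (∏ k ∈ Finset.range e,
          (i / p ^ k % p).choose (2 * s / p ^ k % p)) = 0 :=
        Finset.prod_eq_zero (Finset.mem_range.mpr hj) (Nat.choose_eq_zero_of_lt hlt)
      rw [hzero] at hmod
      exact Nat.modEq_zero_iff_dvd.mp hmod
    have hi0lt : i / p ^ 0 % p < p := Nat.mod_lt _ (by omega)
    have hitlt : i / p ^ t % p < p := Nat.mod_lt _ (by omega)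
    have hle0 : p - 1 - 2 * u ≤ i / p ^ 0 % p := by
      have h := hle 0 (by omega)
      rw [key 0 (by omega)] at h
      simpa [hc] using h
    have hlet : p - 1 - 2 * v ≤ i / p ^ t % p := by
      have h := hle t hte
      rw [key t hte] at h
      simpa [hc, ht0] using h
    refine ⟨p - 1 - i / p ^ 0 % p, p - 1 - i / p ^ t % p, by omega, by omega, ?_⟩
    intro j hj
    by_cases h1 : j = 0
    · subst h1; rw [if_pos rfl]; omega
    by_cases h2 : j = t
    · subst h2; rw [if_neg ht0, if_pos rfl]; omega
    rw [if_neg h1, if_neg h2]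
    have hk := key j hj
    simp only [hc, if_neg h1, if_neg h2] at hk
    have hlj := hle j hj
    have hjlt : i / p ^ j % p < p := Nat.mod_lt _ (by omega)
    omega
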